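/- Let (A,≺,≻,ω) be a quadratic anti-pre-Novikov algebra and P: A → A a linear map such that (A,≻,≺,P,ω) is a quadratic Rota-Baxter anti-pre-Novikov algebra of weight λ (i.e. P is a Rota-Baxter operator of weight λ and ω(P(x),y) + ω(x,P(y)) + λω(x,y) = 0 for all x,y). Then (A,≻,≺, −λ·Id − P, ω) is also a quadratic Rota-Baxter anti-pre-Novikov algebra of weight λ. -/
import Mathlib


def APNAxioms {A : Type*} [AddCommGroup A] (succ prec : A → A → A) : Prop :=
  (∀ x y z : A, succ ((succ x y + prec x y) - (succ y x + prec y x)) z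
      = succ y (succ x z) - succ x (succ y z)) ∧
  (∀ x y z : A, prec x (succ y z + prec y z)
      = prec (succ y x) z - prec (prec x y) z - succ y (prec x z)) ∧
  (∀ x y z : A, succ (succ x y + prec x y) z = -(prec (succ x z) y)) ∧
  (∀ x y z : A, prec (prec x y) z = prec (prec x z) y) ∧
  (∀ x y z : A, prec ((succ x y + prec x y) - (succ y x + prec y x)) z
      = succ x (succ y z + prec y z) - succ y (succ x z + prec x z))
def IsRBAPN {k A : Type*} [Field k] [AddCommGroup A] [Module k A]
    (succ prec : A →ₗ[k] A →ₗ[k] A) (lam : k) (P : A →ₗ[k] A) : Prop :=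
  (∀ x y : A, prec (P x) (P y) = P (prec (P x) y + prec x (P y) + lam • prec x y)) ∧
  (∀ x y : A, succ (P x) (P y) = P (succ (P x) y + succ x (P y) + lam • succ x y))

theorem stmt18 {k A : Type*} [Field k] [AddCommGroup A] [Module k A]
    (succ prec : A →ₗ[k] A →ₗ[k] A)
    (hAPN : APNAxioms (fun x y => succ x y) (fun x y => prec x y))
    (ω : A →ₗ[k] A →ₗ[k] k)
    (hsym : ∀ x y : A, ω x y = ω y x)
    (hnd : ∀ x : A, (∀ y : A, ω x y = 0) → x = 0)
    (hinv1 : ∀ x y z : A, ω (prec x y) z = -(ω x (succ z y + prec z y)))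
    (hinv2 : ∀ x y z : A, ω (succ x y) z
        = ω ((succ x z + prec x z) + (succ z x + prec z x)) y)
    (lam : k) (P : A →ₗ[k] A)
    (hRB : IsRBAPN succ prec lam P)
    (hcompat : ∀ x y : A, ω (P x) y + ω x (P y) + lam * ω x y = 0) :
    IsRBAPN succ prec lam (-(lam • (LinearMap.id : A →ₗ[k] A)) - P) ∧
    (∀ x y : A,
      ω ((-(lam • (LinearMap.id : A →ₗ[k] A)) - P) x) y
        + ω x ((-(lam • (LinearMap.id : A →ₗ[k] A)) - P) y)
        + lam * ω x y = 0) := by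
  refine ⟨⟨fun x y => ?_, fun x y => ?_⟩, fun x y => ?_⟩
  · have h := hRB.1 x y
    simp only [LinearMap.sub_apply, LinearMap.neg_apply, LinearMap.smul_apply,
      LinearMap.id_coe, id_eq, map_sub, map_neg, map_smul, map_add] at h ⊢
    rw [h]
    module
  · have h := hRB.2 x y
    simp only [LinearMap.sub_apply, LinearMap.neg_apply, LinearMap.smul_apply,
      LinearMap.id_coe, id_eq, map_sub, map_neg, map_smul, map_add] at h ⊢
    rw [h]
    module
  · have h := hcompat x y
    simp only [LinearMap.sub_apply, LinearMap.neg_apply, LinearMap.smul_apply,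
      LinearMap.id_coe, id_eq, map_sub, map_neg, map_smul, map_add, smul_eq_mul] at h ⊢
    linear_combination -h
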